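/- Let ν ≥ 16 and define η_t = (4dq)^{-1} min(1, sqrt(ν log(t+1)/t)) for integers t ≥ 1, with constants d ≥ 1 and q > 0. Then ∑_{t=1}^T 1/(η_t t) ≤ 4dq (log(ν² + 1) + 2 sqrt(T/ν)) for every integer T ≥ 1. -/

import Mathlib

lemma log_le_div_e {y : ℝ} (hy : 0 < y) : Real.log y ≤ y / Real.exp 1 := by
  have h := Real.log_le_sub_one_of_pos (div_pos hy (Real.exp_pos 1))
  rw [Real.log_div hy.ne' (Real.exp_ne_zero 1), Real.log_exp] at h
  linarith

lemma harmonic_le (n : ℕ) (hn : 1 ≤ n) :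
    ∑ t ∈ Finset.Icc 1 n, (1:ℝ)/t ≤ 1 + Real.log n := by
  induction n with
  | zero => omega
  | succ m ih =>
    rcases Nat.eq_or_lt_of_le hn with h | h
    · simp [← h]
    · have hm : 1 ≤ m := by omega
      have hm0 : (0:ℝ) < m := by exact_mod_cast hm
      rw [Finset.sum_Icc_succ_top (by omega)]
      have hlog : (1:ℝ)/(m+1) ≤ Real.log (m+1) - Real.log m := by
        have h2 := Real.log_le_sub_one_of_pos (show (0:ℝ) < m / (m+1) by positivity)
        rw [Real.log_div hm0.ne' (by positivity)] at h2
        have : (m:ℝ)/(m+1) - 1 = -(1/(m+1)) := by field_simp; ring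
        linarith [this ▸ h2]
      have := ih hm
      push_cast
      push_cast at this
      linarith

lemma invsqrt_sum_le (n : ℕ) :
    ∑ t ∈ Finset.Icc 1 n, 1/Real.sqrt t ≤ 2 * Real.sqrt n := by
  induction n with
  | zero => simp
  | succ m ih =>
    rw [Finset.sum_Icc_succ_top (by omega)]
    have ha : Real.sqrt m ^ 2 = m := Real.sq_sqrt (by positivity)
    have hb : Real.sqrt (m+1) ^ 2 = (m:ℝ)+1 := by
      rw [Real.sq_sqrt (by positivity)]
    have hb1 : (1:ℝ) ≤ Real.sqrt (m+1) := by
      rw [show ((m:ℕ)+1 : ℝ) = ((m+1 : ℕ) : ℝ) by push_cast; ring] at hb ⊢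
      exact Real.one_le_sqrt.mpr (by exact_mod_cast Nat.succ_le_succ (Nat.zero_le m))
    have ha0 : 0 ≤ Real.sqrt m := Real.sqrt_nonneg _
    have key : 1/Real.sqrt ((m:ℝ)+1) ≤ 2*Real.sqrt ((m:ℝ)+1) - 2*Real.sqrt m := by
      rw [div_le_iff₀ (by linarith)]
      nlinarith [sq_nonneg (Real.sqrt m - Real.sqrt (m+1))]
    push_cast
    push_cast at ih
    linarith

lemma A_bound (ν : ℝ) (hν : 16 ≤ ν) (t : ℕ) (ht : 1 ≤ t)
    (h : (t:ℝ) ≤ ν * Real.log (t+1)) : (t:ℝ) ≤ ν^2/3 := by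
  set x : ℝ := (t:ℝ) with hx
  have hx1 : (1:ℝ) ≤ x := by rw [hx]; exact_mod_cast ht
  have hx0 : 0 < x := by linarith
  set B : ℝ := (2*x) ^ ((1:ℝ)/4) with hB
  have hB0 : 0 ≤ B := Real.rpow_nonneg (by linarith) _
  have hB4 : B ^ (4:ℕ) = 2*x := by
    rw [hB, ← Real.rpow_natCast ((2*x) ^ ((1:ℝ)/4)) 4, ← Real.rpow_mul (by linarith)]
    norm_num
  have hlog : Real.log (x+1) ≤ 4 * B / Real.exp 1 := by
    have h1 : Real.log (x+1) = 4 * Real.log ((x+1) ^ ((1:ℝ)/4)) := by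
      rw [Real.log_rpow (by linarith)]; ring
    have h2 : Real.log ((x+1) ^ ((1:ℝ)/4)) ≤ (x+1) ^ ((1:ℝ)/4) / Real.exp 1 :=
      log_le_div_e (Real.rpow_pos_of_pos (by linarith) _)
    have h3 : (x+1) ^ ((1:ℝ)/4) ≤ B :=
      Real.rpow_le_rpow (by linarith) (by linarith) (by norm_num)
    calc Real.log (x+1) = 4 * Real.log ((x+1) ^ ((1:ℝ)/4)) := h1
      _ ≤ 4 * ((x+1) ^ ((1:ℝ)/4) / Real.exp 1) := by linarith
      _ ≤ 4 * B / Real.exp 1 := by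
          rw [mul_div_assoc]
          gcongr
  have he : Real.exp 1 * x ≤ 4 * ν * B := by
    have hν0 : (0:ℝ) < ν := by linarith
    have := mul_le_mul_of_nonneg_left hlog (le_of_lt hν0)
    have hex : Real.exp 1 > 0 := Real.exp_pos 1
    have h4 : x ≤ ν * (4 * B / Real.exp 1) := le_trans h this
    calc Real.exp 1 * x ≤ Real.exp 1 * (ν * (4 * B / Real.exp 1)) := by
          exact mul_le_mul_of_nonneg_left h4 (le_of_lt hex)
      _ = 4 * ν * B := by field_simp
  have hpow : (Real.exp 1 * x)^(4:ℕ) ≤ (4 * ν * B)^(4:ℕ) := by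
    apply pow_le_pow_left₀ (by positivity) he
  have he4 : (54:ℝ) ≤ Real.exp 1 ^ (4:ℕ) := by
    have h1 := Real.exp_one_gt_d9
    have h2 : (2.7182818283:ℝ)^(4:ℕ) ≤ Real.exp 1 ^ (4:ℕ) :=
      pow_le_pow_left₀ (by norm_num) (le_of_lt h1) 4
    nlinarith
  have hkey : 54 * x^4 ≤ 512 * ν^4 * x := by
    have : (Real.exp 1 * x)^(4:ℕ) = Real.exp 1 ^(4:ℕ) * x^4 := by ring
    have h2 : (4 * ν * B)^(4:ℕ) = 256 * ν^4 * (2*x) := by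
      rw [mul_pow, mul_pow, hB4]; ring
    nlinarith [pow_nonneg (le_of_lt hx0) 4]
  have h5 : 54*x^3 ≤ 512*ν^4 := le_of_mul_le_mul_right (by nlinarith [hkey]) hx0
  have hx3 : x^3 ≤ (ν^2/3)^3 := by
    have hν2 : (256:ℝ) ≤ ν^2 := by nlinarith
    nlinarith [mul_le_mul_of_nonneg_right hν2 (show (0:ℝ) ≤ ν^4 by positivity)]
  exact le_of_pow_le_pow_left₀ (by norm_num) (by positivity) hx3

noncomputable def Gfun (ν : ℝ) (t : ℕ) : ℝ :=
  if (t:ℝ) ≤ ν * Real.log (t+1) then 1/(t:ℝ) else 0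

noncomputable def Hfun (ν : ℝ) (t : ℕ) : ℝ :=
  if (t:ℝ) ≤ ν * Real.log (t+1) then 0 else 1/Real.sqrt (ν*t)

lemma G_sum_le (ν : ℝ) (hν : 16 ≤ ν) (T : ℕ) :
    ∑ t ∈ Finset.Icc 1 T, Gfun ν t ≤ Real.log (ν^2+1) := by
  classical
  set M : ℕ := Nat.floor (ν^2/3) with hM
  have hM1 : 1 ≤ M := Nat.le_floor (by push_cast; nlinarith)
  have hM0 : (0:ℝ) < M := by exact_mod_cast hM1
  have step1 : ∑ t ∈ Finset.Icc 1 T, Gfun ν t ≤ ∑ t ∈ Finset.Icc 1 M, 1/(t:ℝ) := by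
    have e1 : ∑ t ∈ Finset.Icc 1 T, Gfun ν t
        = ∑ t ∈ (Finset.Icc 1 T).filter (fun t : ℕ => (t:ℝ) ≤ ν * Real.log ((t:ℝ)+1)), 1/(t:ℝ) := by
      rw [Finset.sum_filter]
      rfl
    rw [e1]
    apply Finset.sum_le_sum_of_subset_of_nonneg
    · intro x hx
      simp only [Finset.mem_filter, Finset.mem_Icc] at hx ⊢
      refine ⟨hx.1.1, Nat.le_floor ?_⟩
      exact A_bound ν hν x hx.1.1 hx.2
    · intro i _ _
      positivity
  have h2 := harmonic_le M hM1
  have h3 : 1 + Real.log M ≤ Real.log (ν^2+1) := by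
    have hMle : (M:ℝ) ≤ ν^2/3 := Nat.floor_le (by positivity)
    have he3 : Real.exp 1 < 3 := by have := Real.exp_one_lt_d9; linarith
    have hMe : Real.exp 1 * M ≤ ν^2 + 1 := by nlinarith [Real.exp_pos 1]
    calc 1 + Real.log M = Real.log (Real.exp 1 * M) := by
          rw [Real.log_mul (Real.exp_ne_zero 1) (ne_of_gt hM0), Real.log_exp]
      _ ≤ Real.log (ν^2+1) := Real.log_le_log (by positivity) hMe
  linarith

lemma H_sum_le (ν : ℝ) (hν0 : 0 < ν) (T : ℕ) :
    ∑ t ∈ Finset.Icc 1 T, Hfun ν t ≤ 2 * Real.sqrt (T/ν) := by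
  have step : ∀ t ∈ Finset.Icc 1 T, Hfun ν t ≤ (Real.sqrt ν)⁻¹ * (1/Real.sqrt t) := by
    intro t ht
    unfold Hfun
    split
    · positivity
    · rw [Real.sqrt_mul (le_of_lt hν0), one_div, mul_inv, ← one_div (Real.sqrt t)]
  calc ∑ t ∈ Finset.Icc 1 T, Hfun ν t
      ≤ ∑ t ∈ Finset.Icc 1 T, (Real.sqrt ν)⁻¹ * (1/Real.sqrt t) := Finset.sum_le_sum step
    _ = (Real.sqrt ν)⁻¹ * ∑ t ∈ Finset.Icc 1 T, 1/Real.sqrt t := by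
        rw [Finset.mul_sum]
    _ ≤ (Real.sqrt ν)⁻¹ * (2 * Real.sqrt T) := by
        apply mul_le_mul_of_nonneg_left (invsqrt_sum_le T) (by positivity)
    _ = 2 * Real.sqrt (T/ν) := by
        rw [Real.sqrt_div (by positivity : (0:ℝ) ≤ (T:ℝ))]
        field_simp

lemma pointwise_bound (ν d q : ℝ) (hν : 16 ≤ ν) (hd : 1 ≤ d) (hq : 0 < q)
    (t : ℕ) (ht : 1 ≤ t) :
    1/(((4*d*q)⁻¹ * min 1 (Real.sqrt (ν * Real.log (t+1) / t))) * t)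
      ≤ 4*d*q * (Gfun ν t + Hfun ν t) := by
  have hν0 : (0:ℝ) < ν := by linarith
  have hcq : (0:ℝ) < 4*d*q := by nlinarith
  have ht0 : (0:ℝ) < t := by exact_mod_cast ht
  have hlogpos : 0 < Real.log ((t:ℝ)+1) := Real.log_pos (by linarith)
  by_cases hcase : (t:ℝ) ≤ ν * Real.log (t+1)
  · have hs1 : (1:ℝ) ≤ Real.sqrt (ν * Real.log (t+1) / t) := by
      apply Real.one_le_sqrt.mpr
      rw [le_div_iff₀ ht0]; linarith
    rw [min_eq_left hs1]
    have hG : Gfun ν t = 1/(t:ℝ) := if_pos hcase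
    have hH : Hfun ν t = 0 := if_pos hcase
    rw [hG, hH]
    apply le_of_eq
    field_simp
    ring
  · push_neg at hcase
    have ht2 : (2:ℕ) ≤ t := by
      by_contra h2
      have ht1 : t = 1 := by omega
      subst ht1
      have hl2 : (0.6931471803:ℝ) < Real.log 2 := Real.log_two_gt_d9
      push_cast at hcase
      norm_num at hcase
      nlinarith
    have ht2' : (2:ℝ) ≤ t := by exact_mod_cast ht2
    have hL1 : (1:ℝ) ≤ Real.log ((t:ℝ)+1) := by
      have he : Real.exp 1 ≤ (t:ℝ)+1 := by
        have := Real.exp_one_lt_d9; linarith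
      calc (1:ℝ) = Real.log (Real.exp 1) := (Real.log_exp 1).symm
        _ ≤ Real.log ((t:ℝ)+1) := Real.log_le_log (Real.exp_pos 1) he
    set s := Real.sqrt (ν * Real.log (t+1) / t) with hs
    have hs0 : 0 < s := Real.sqrt_pos.mpr (by positivity)
    have hs_le1 : s ≤ 1 := by
      rw [hs]
      apply Real.sqrt_le_one.mpr
      rw [div_le_one ht0]; linarith
    rw [min_eq_right hs_le1]
    have hG : Gfun ν t = 0 := if_neg (not_le.mpr hcase)
    have hH : Hfun ν t = 1/Real.sqrt (ν*t) := if_neg (not_le.mpr hcase)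
    rw [hG, hH]
    have hs2 : s^2 = ν * Real.log (t+1) / t := Real.sq_sqrt (by positivity)
    have hst : Real.sqrt (ν * t) ≤ s * t := by
      have h1 : ν * t ≤ (s*t)^2 := by
        have e1 : (s*t)^2 = (ν * Real.log (t+1) / t) * t^2 := by
          rw [mul_pow, hs2]
        rw [e1]
        have e2 : (ν * Real.log (t+1) / t) * t^2 = ν * Real.log (t+1) * t := by
          field_simp
        rw [e2]
        nlinarith
      calc Real.sqrt (ν*t) ≤ Real.sqrt ((s*t)^2) := Real.sqrt_le_sqrt h1
        _ = s*t := Real.sqrt_sq (by positivity)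
    have hsqrt0 : 0 < Real.sqrt (ν*t) := Real.sqrt_pos.mpr (by positivity)
    have key : 1/(s*t) ≤ 1/Real.sqrt (ν*t) := by
      apply one_div_le_one_div_of_le hsqrt0 hst
    calc 1/((4*d*q)⁻¹ * s * t) = 4*d*q * (1/(s*t)) := by
          field_simp
      _ ≤ 4*d*q * (1/Real.sqrt (ν*t)) := by
          apply mul_le_mul_of_nonneg_left key (le_of_lt hcq)
      _ = 4*d*q * (0 + 1/Real.sqrt (ν*t)) := by ring

theorem stmt_9 (ν d q : ℝ) (hν : 16 ≤ ν) (hd : 1 ≤ d) (hq : 0 < q)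
    (η : ℕ → ℝ)
    (hη : ∀ t : ℕ, 1 ≤ t →
      η t = (4 * d * q)⁻¹ * min 1 (Real.sqrt (ν * Real.log (t + 1) / t)))
    (T : ℕ) (hT : 1 ≤ T) :
    ∑ t ∈ Finset.Icc 1 T, 1 / (η t * t)
      ≤ 4 * d * q * (Real.log (ν ^ 2 + 1) + 2 * Real.sqrt (T / ν)) := by
  have hν0 : (0:ℝ) < ν := by linarith
  have hcq : (0:ℝ) ≤ 4*d*q := by nlinarith
  calc ∑ t ∈ Finset.Icc 1 T, 1/(η t * t)
      ≤ ∑ t ∈ Finset.Icc 1 T, 4*d*q * (Gfun ν t + Hfun ν t) := by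
        apply Finset.sum_le_sum
        intro t htmem
        obtain ⟨ht1, _⟩ := Finset.mem_Icc.mp htmem
        rw [hη t ht1]
        exact pointwise_bound ν d q hν hd hq t ht1
    _ = 4*d*q * ((∑ t ∈ Finset.Icc 1 T, Gfun ν t) + ∑ t ∈ Finset.Icc 1 T, Hfun ν t) := by
        rw [← Finset.mul_sum, Finset.sum_add_distrib]
    _ ≤ 4*d*q * (Real.log (ν^2+1) + 2*Real.sqrt (T/ν)) := by
        apply mul_le_mul_of_nonneg_left _ hcq
        exact add_le_add (G_sum_le ν hν T) (H_sum_le ν hν0 T)
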